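/- Every nonnegative matrix factorization M = AW of inner dimension r can be transformed into a stable nonnegative matrix factorization M = Ã W̃ of the same inner dimension r, with Ã and W̃ nonnegative. -/

import Mathlib

open scoped Classical

/-- A subset `S` of column indices of `A` is admissible for a vector `v` if `v` lies in
the conical hull of the columns of `A` indexed by `S`. -/
def Admissible {m r : ℕ} (A : Matrix (Fin m) (Fin r) ℝ) (v : Fin m → ℝ)
    (S : Finset (Fin r)) : Prop :=
  ∃ α : Fin r → ℝ, (∀ k, 0 ≤ α k) ∧ (∀ k, k ∉ S → α k = 0) ∧
    ∀ j, v j = ∑ k : Fin r, α k * A j k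

/-- Encoding of a subset of `Fin r` giving larger weight to smaller indices, so that
among subsets of equal cardinality, lexicographically earlier subsets get larger codes. -/
def subsetCode {r : ℕ} (S : Finset (Fin r)) : ℕ := ∑ i ∈ S, 2 ^ (r - 1 - (i : ℕ))

/-- The order on subsets of `[r]`: smaller cardinality first, ties broken
lexicographically (as increasing sequences of indices). -/
def SubsetLt {r : ℕ} (S T : Finset (Fin r)) : Prop :=
  S.card < T.card ∨ (S.card = T.card ∧ subsetCode T < subsetCode S)

/-- `S` is the (lexicographically) first admissible subset for `v`. -/
def IsFirstAdmissible {m r : ℕ} (A : Matrix (Fin m) (Fin r) ℝ) (v : Fin m → ℝ)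
    (S : Finset (Fin r)) : Prop :=
  Admissible A v S ∧ ∀ T, Admissible A v T → T ≠ S → SubsetLt S T

/-- A nonnegative matrix factorization `M = A * W` is stable if every column of `W` is
supported in the first admissible subset of columns of `A` for the corresponding column
of `M`, and every row of `A` is supported in the first admissible subset of rows of `W`
for the corresponding row of `M`. -/
def Stable {m n r : ℕ} (M : Matrix (Fin m) (Fin n) ℝ)
    (A : Matrix (Fin m) (Fin r) ℝ) (W : Matrix (Fin r) (Fin n) ℝ) : Prop :=
  (∀ i : Fin n, ∃ S : Finset (Fin r),
      IsFirstAdmissible A (fun j => M j i) S ∧ ∀ k, W k i ≠ 0 → k ∈ S) ∧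
  (∀ j : Fin m, ∃ T : Finset (Fin r),
      IsFirstAdmissible W.transpose (fun i => M j i) T ∧ ∀ k, A j k ≠ 0 → k ∈ T)

lemma sum_range_two_pow_lt (r : ℕ) : ∑ k ∈ Finset.range r, 2 ^ k < 2 ^ r := by
  induction r with
  | zero => simp
  | succ r ih =>
    rw [Finset.sum_range_succ, pow_succ]
    omega

lemma sum_two_pow_inj : ∀ (c : ℕ) (U V : Finset ℕ), U.card = c →
    (∑ k ∈ U, 2 ^ k) = (∑ k ∈ V, 2 ^ k) → U = V := by
  intro c
  induction c with
  | zero =>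
    intro U V hU hsum
    rw [Finset.card_eq_zero] at hU
    subst hU
    simp only [Finset.sum_empty] at hsum
    by_contra hne
    obtain ⟨k, hk⟩ : V.Nonempty := Finset.nonempty_iff_ne_empty.2 (fun h => hne h.symm)
    have h1 : 2 ^ k ≤ ∑ k ∈ V, 2 ^ k := Finset.single_le_sum (fun i _ => Nat.zero_le _) hk
    have h2 : 0 < 2 ^ k := Nat.pow_pos (by norm_num)
    omega
  | succ c ih =>
    intro U V hU hsum
    have hUne : U.Nonempty := Finset.card_pos.1 (by omega)
    set a := U.max' hUne with ha
    have haU : a ∈ U := U.max'_mem hUne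
    have hsub : U ⊆ Finset.range (a + 1) := by
      intro x hx
      exact Finset.mem_range.2 (Nat.lt_succ_of_le (U.le_max' x hx))
    have hUlt : (∑ k ∈ U, 2 ^ k) < 2 ^ (a + 1) :=
      lt_of_le_of_lt (Finset.sum_le_sum_of_subset hsub) (sum_range_two_pow_lt _)
    have hUge : 2 ^ a ≤ ∑ k ∈ U, 2 ^ k := Finset.single_le_sum (fun i _ => Nat.zero_le _) haU
    have hVne : V.Nonempty := by
      by_contra h
      rw [Finset.not_nonempty_iff_eq_empty] at h
      subst h
      simp only [Finset.sum_empty] at hsum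
      have : 0 < 2 ^ a := Nat.pow_pos (by norm_num)
      omega
    set b := V.max' hVne with hb
    have hbV : b ∈ V := V.max'_mem hVne
    have hsubV : V ⊆ Finset.range (b + 1) := by
      intro x hx
      exact Finset.mem_range.2 (Nat.lt_succ_of_le (V.le_max' x hx))
    have hVlt : (∑ k ∈ V, 2 ^ k) < 2 ^ (b + 1) :=
      lt_of_le_of_lt (Finset.sum_le_sum_of_subset hsubV) (sum_range_two_pow_lt _)
    have hVge : 2 ^ b ≤ ∑ k ∈ V, 2 ^ k := Finset.single_le_sum (fun i _ => Nat.zero_le _) hbV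
    have hab : a = b := by
      rcases lt_trichotomy a b with h | h | h
      · exfalso
        have : 2 ^ (a + 1) ≤ 2 ^ b := Nat.pow_le_pow_right (by norm_num) h
        omega
      · exact h
      · exfalso
        have : 2 ^ (b + 1) ≤ 2 ^ a := Nat.pow_le_pow_right (by norm_num) h
        omega
    have hUe : 2 ^ a + ∑ k ∈ U.erase a, 2 ^ k = ∑ k ∈ U, 2 ^ k := Finset.add_sum_erase _ _ haU
    have hVe : 2 ^ a + ∑ k ∈ V.erase a, 2 ^ k = ∑ k ∈ V, 2 ^ k := by
      rw [hab]; exact Finset.add_sum_erase _ _ hbV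
    have hcard : (U.erase a).card = c := by
      rw [Finset.card_erase_of_mem haU]; omega
    have heq := ih (U.erase a) (V.erase a) hcard (by omega)
    ext x
    by_cases hx : x = a
    · subst hx
      simp [haU, hab ▸ hbV]
    · constructor
      · intro h
        have : x ∈ U.erase a := Finset.mem_erase.2 ⟨hx, h⟩
        rw [heq] at this
        exact (Finset.mem_erase.1 this).2
      · intro h
        have : x ∈ V.erase a := Finset.mem_erase.2 ⟨hx, h⟩
        rw [← heq] at this
        exact (Finset.mem_erase.1 this).2

lemma subsetCode_eq_image {r : ℕ} (S : Finset (Fin r)) :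
    subsetCode S = ∑ k ∈ S.image (fun i : Fin r => r - 1 - (i : ℕ)), 2 ^ k := by
  refine (Finset.sum_image ?_).symm
  intro x _ y _ h
  have hx := x.2
  have hy := y.2
  exact Fin.ext (by simp only at h; omega)

lemma fin_flip_inj {r : ℕ} : Function.Injective (fun i : Fin r => r - 1 - (i : ℕ)) := by
  intro x y h
  have hx := x.2
  have hy := y.2
  exact Fin.ext (by simp only at h; omega)

lemma subsetCode_inj {r : ℕ} (S T : Finset (Fin r)) (h : subsetCode S = subsetCode T) :
    S = T := by
  rw [subsetCode_eq_image, subsetCode_eq_image] at h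
  have := sum_two_pow_inj (S.image (fun i : Fin r => r - 1 - (i : ℕ))).card _ _ rfl h
  exact Finset.image_injective fin_flip_inj this

lemma subsetCode_lt {r : ℕ} (S : Finset (Fin r)) : subsetCode S < 2 ^ r := by
  rw [subsetCode_eq_image]
  have hsub : S.image (fun i : Fin r => r - 1 - (i : ℕ)) ⊆ Finset.range r := by
    intro x hx
    obtain ⟨i, _, rfl⟩ := Finset.mem_image.1 hx
    have := i.2
    exact Finset.mem_range.2 (by omega)
  exact lt_of_le_of_lt (Finset.sum_le_sum_of_subset hsub) (sum_range_two_pow_lt _)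

/-- Rank of a subset: position in the `SubsetLt` order. -/
def subsetRank {r : ℕ} (S : Finset (Fin r)) : ℕ :=
  S.card * 2 ^ r + (2 ^ r - 1 - subsetCode S)

lemma subsetRank_lt {r : ℕ} {S T : Finset (Fin r)} (h : SubsetLt S T) :
    subsetRank S < subsetRank T := by
  have hS := subsetCode_lt S
  have hT := subsetCode_lt T
  rcases h with h | ⟨hc, hcode⟩
  · calc subsetRank S < S.card * 2 ^ r + 2 ^ r := by
          unfold subsetRank; omega
      _ = (S.card + 1) * 2 ^ r := by ring
      _ ≤ T.card * 2 ^ r := Nat.mul_le_mul_right _ h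
      _ ≤ subsetRank T := Nat.le_add_right _ _
  · unfold subsetRank
    rw [hc]
    omega
  
lemma subsetRank_mono {r : ℕ} {S T : Finset (Fin r)} (h : T ⊆ S) :
    subsetRank T ≤ subsetRank S := by
  rcases eq_or_lt_of_le (Finset.card_le_card h) with hc | hc
  · rw [Finset.eq_of_subset_of_card_le h (le_of_eq hc.symm)]
  · exact le_of_lt (subsetRank_lt (Or.inl hc))

lemma subsetLt_trichotomy {r : ℕ} (S T : Finset (Fin r)) (h : S ≠ T) :
    SubsetLt S T ∨ SubsetLt T S := by
  rcases lt_trichotomy S.card T.card with hc | hc | hc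
  · exact Or.inl (Or.inl hc)
  · have hcode : subsetCode S ≠ subsetCode T := fun he => h (subsetCode_inj S T he)
    rcases lt_or_gt_of_ne hcode with hlt | hgt
    · exact Or.inr (Or.inr ⟨hc.symm, hlt⟩)
    · exact Or.inl (Or.inr ⟨hc, hgt⟩)
  · exact Or.inr (Or.inl hc)

/-- If some admissible subset exists, a first admissible subset exists. -/
lemma exists_firstAdmissible {m r : ℕ} (A : Matrix (Fin m) (Fin r) ℝ) (v : Fin m → ℝ)
    (h : ∃ S, Admissible A v S) : ∃ S, IsFirstAdmissible A v S := by
  obtain ⟨S0, hS0⟩ := h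
  have hne : (Finset.univ.filter (fun S : Finset (Fin r) => Admissible A v S)).Nonempty :=
    ⟨S0, by simp [hS0]⟩
  obtain ⟨S, hSmem, hSmin⟩ := Finset.exists_min_image _ subsetRank hne
  have hSadm : Admissible A v S := (Finset.mem_filter.1 hSmem).2
  refine ⟨S, hSadm, fun T hT hTne => ?_⟩
  rcases subsetLt_trichotomy S T (fun he => hTne he.symm) with h | h
  · exact h
  · exfalso
    have h1 : subsetRank S ≤ subsetRank T :=
      hSmin T (Finset.mem_filter.2 ⟨Finset.mem_univ _, hT⟩)
    have h2 := subsetRank_lt h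
    omega

/-- Column support of `W`. -/
noncomputable def colSupp {r n : ℕ} (W : Matrix (Fin r) (Fin n) ℝ) (i : Fin n) : Finset (Fin r) :=
  Finset.univ.filter (fun k => W k i ≠ 0)

/-- Row support of `A`. -/
noncomputable def rowSupp {m r : ℕ} (A : Matrix (Fin m) (Fin r) ℝ) (j : Fin m) : Finset (Fin r) :=
  Finset.univ.filter (fun k => A j k ≠ 0)

/-- Measure of a factorization. -/
noncomputable def measNMF {m n r : ℕ} (A : Matrix (Fin m) (Fin r) ℝ) (W : Matrix (Fin r) (Fin n) ℝ) : ℕ :=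
  (∑ i : Fin n, subsetRank (colSupp W i)) + (∑ j : Fin m, subsetRank (rowSupp A j))

lemma adm_colSupp {m n r : ℕ} {M : Matrix (Fin m) (Fin n) ℝ}
    {A : Matrix (Fin m) (Fin r) ℝ} {W : Matrix (Fin r) (Fin n) ℝ}
    (hW : ∀ k j, 0 ≤ W k j) (hfac : M = A * W) (i : Fin n) :
    Admissible A (fun j => M j i) (colSupp W i) := by
  subst hfac
  refine ⟨fun k => W k i, fun k => hW k i, fun k hk => ?_, fun j => ?_⟩
  · by_contra h
    exact hk (Finset.mem_filter.2 ⟨Finset.mem_univ _, h⟩)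
  · show (A * W) j i = ∑ k : Fin r, W k i * A j k
    rw [Matrix.mul_apply]
    exact Finset.sum_congr rfl (fun k _ => mul_comm _ _)

lemma adm_rowSupp {m n r : ℕ} {M : Matrix (Fin m) (Fin n) ℝ}
    {A : Matrix (Fin m) (Fin r) ℝ} {W : Matrix (Fin r) (Fin n) ℝ}
    (hA : ∀ i k, 0 ≤ A i k) (hfac : M = A * W) (j : Fin m) :
    Admissible W.transpose (fun i => M j i) (rowSupp A j) := by
  subst hfac
  refine ⟨fun k => A j k, fun k => hA j k, fun k hk => ?_, fun i => ?_⟩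
  · by_contra h
    exact hk (Finset.mem_filter.2 ⟨Finset.mem_univ _, h⟩)
  · show (A * W) j i = ∑ k : Fin r, A j k * W.transpose i k
    rw [Matrix.mul_apply]
    exact Finset.sum_congr rfl (fun k _ => by rw [Matrix.transpose_apply])

theorem stmt_7_aux {m n r : ℕ} (M : Matrix (Fin m) (Fin n) ℝ)
    (A : Matrix (Fin m) (Fin r) ℝ) (W : Matrix (Fin r) (Fin n) ℝ)
    (hA : ∀ i k, 0 ≤ A i k) (hW : ∀ k j, 0 ≤ W k j) (hfac : M = A * W) :
    ∃ (A' : Matrix (Fin m) (Fin r) ℝ) (W' : Matrix (Fin r) (Fin n) ℝ),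
      (∀ i k, 0 ≤ A' i k) ∧ (∀ k j, 0 ≤ W' k j) ∧ M = A' * W' ∧ Stable M A' W' := by
  suffices h : ∀ N (A : Matrix (Fin m) (Fin r) ℝ) (W : Matrix (Fin r) (Fin n) ℝ),
      (∀ i k, 0 ≤ A i k) → (∀ k j, 0 ≤ W k j) → M = A * W → measNMF A W < N →
      ∃ (A' : Matrix (Fin m) (Fin r) ℝ) (W' : Matrix (Fin r) (Fin n) ℝ),
        (∀ i k, 0 ≤ A' i k) ∧ (∀ k j, 0 ≤ W' k j) ∧ M = A' * W' ∧ Stable M A' W' by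
    exact h (measNMF A W + 1) A W hA hW hfac (Nat.lt_succ_self _)
  intro N
  induction N with
  | zero => intro A W _ _ _ h; exact absurd h (Nat.not_lt_zero _)
  | succ N ih =>
    intro A W hA hW hfac hlt
    by_cases hst : Stable M A W
    · exact ⟨A, W, hA, hW, hfac, hst⟩
    rw [Stable, not_and_or] at hst
    rcases hst with h1 | h2
    · -- a column of W violates stability
      push_neg at h1
      obtain ⟨i, hi⟩ := h1
      obtain ⟨S, hSfa⟩ := exists_firstAdmissible A (fun j => M j i)
        ⟨colSupp W i, adm_colSupp hW hfac i⟩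
      obtain ⟨k0, hk0ne, hk0notin⟩ := hi S hSfa
      obtain ⟨α, hα0, hαsupp, hαeq⟩ := hSfa.1
      set W' : Matrix (Fin r) (Fin n) ℝ := fun k i' => if i' = i then α k else W k i' with hW'
      have hW'nonneg : ∀ k j, 0 ≤ W' k j := by
        intro k j
        simp only [hW']
        split
        · exact hα0 k
        · exact hW k j
      have hfac' : M = A * W' := by
        ext j i'
        rw [Matrix.mul_apply]
        by_cases h : i' = i
        · subst h
          simp only [hW', if_pos rfl]
          exact (hαeq _).trans (Finset.sum_congr rfl (fun k _ => mul_comm _ _))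
        · simp only [hW', if_neg h]
          rw [hfac, Matrix.mul_apply]
      -- measure decreases
      have hsupp_sub : colSupp W' i ⊆ S := by
        intro k hk
        have : W' k i ≠ 0 := (Finset.mem_filter.1 hk).2
        simp only [hW', if_pos rfl] at this
        by_contra hk'
        exact this (hαsupp k hk')
      have hold_ne : colSupp W i ≠ S := by
        intro h
        exact hk0notin (h ▸ Finset.mem_filter.2 ⟨Finset.mem_univ _, hk0ne⟩)
      have hlt_rank : subsetRank (colSupp W' i) < subsetRank (colSupp W i) := by
        have h1 : SubsetLt S (colSupp W i) :=
          hSfa.2 (colSupp W i) (adm_colSupp hW hfac i) hold_ne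
        exact lt_of_le_of_lt (subsetRank_mono hsupp_sub) (subsetRank_lt h1)
      have hcol_eq : ∀ i', i' ≠ i → colSupp W' i' = colSupp W i' := by
        intro i' hne
        unfold colSupp
        apply Finset.filter_congr
        intro k _
        simp [hW', hne]
      have hrow_eq : ∀ j, rowSupp A j = rowSupp A j := fun _ => rfl
      have hmeas : measNMF A W' < measNMF A W := by
        unfold measNMF
        have hsum : (∑ i' : Fin n, subsetRank (colSupp W' i')) <
            ∑ i' : Fin n, subsetRank (colSupp W i') := by
          apply Finset.sum_lt_sum
          · intro i' _
            by_cases h : i' = i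
            · subst h; exact le_of_lt hlt_rank
            · rw [hcol_eq i' h]
          · exact ⟨i, Finset.mem_univ _, hlt_rank⟩
        omega
      exact ih A W' hA hW'nonneg hfac' (by omega)
    · -- a row of A violates stability
      push_neg at h2
      obtain ⟨j, hj⟩ := h2
      obtain ⟨T, hTfa⟩ := exists_firstAdmissible W.transpose (fun i => M j i)
        ⟨rowSupp A j, adm_rowSupp hA hfac j⟩
      obtain ⟨k0, hk0ne, hk0notin⟩ := hj T hTfa
      obtain ⟨α, hα0, hαsupp, hαeq⟩ := hTfa.1
      set A' : Matrix (Fin m) (Fin r) ℝ := fun j' k => if j' = j then α k else A j' k with hA'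
      have hA'nonneg : ∀ i k, 0 ≤ A' i k := by
        intro i k
        simp only [hA']
        split
        · exact hα0 k
        · exact hA i k
      have hfac' : M = A' * W := by
        ext j' i
        rw [Matrix.mul_apply]
        by_cases h : j' = j
        · subst h
          simp only [hA', if_pos rfl]
          exact (hαeq _).trans
            (Finset.sum_congr rfl (fun k _ => by rw [Matrix.transpose_apply]))
        · simp only [hA', if_neg h]
          rw [hfac, Matrix.mul_apply]
      have hsupp_sub : rowSupp A' j ⊆ T := by
        intro k hk
        have : A' j k ≠ 0 := (Finset.mem_filter.1 hk).2
        simp only [hA', if_pos rfl] at this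
        by_contra hk'
        exact this (hαsupp k hk')
      have hold_ne : rowSupp A j ≠ T := by
        intro h
        exact hk0notin (h ▸ Finset.mem_filter.2 ⟨Finset.mem_univ _, hk0ne⟩)
      have hlt_rank : subsetRank (rowSupp A' j) < subsetRank (rowSupp A j) := by
        have h1 : SubsetLt T (rowSupp A j) :=
          hTfa.2 (rowSupp A j) (adm_rowSupp hA hfac j) hold_ne
        exact lt_of_le_of_lt (subsetRank_mono hsupp_sub) (subsetRank_lt h1)
      have hrow_eq : ∀ j', j' ≠ j → rowSupp A' j' = rowSupp A j' := by
        intro j' hne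
        unfold rowSupp
        apply Finset.filter_congr
        intro k _
        simp [hA', hne]
      have hmeas : measNMF A' W < measNMF A W := by
        unfold measNMF
        have hsum : (∑ j' : Fin m, subsetRank (rowSupp A' j')) <
            ∑ j' : Fin m, subsetRank (rowSupp A j') := by
          apply Finset.sum_lt_sum
          · intro j' _
            by_cases h : j' = j
            · subst h; exact le_of_lt hlt_rank
            · rw [hrow_eq j' h]
          · exact ⟨j, Finset.mem_univ _, hlt_rank⟩
        omega
      exact ih A' W hA'nonneg hW hfac' (by omega)


/-- every nonnegative matrix factorization of inner dimension r can be
transformed into a stable one of the same inner dimension. -/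
theorem stmt_7 {m n r : ℕ} (M : Matrix (Fin m) (Fin n) ℝ)
    (A : Matrix (Fin m) (Fin r) ℝ) (W : Matrix (Fin r) (Fin n) ℝ)
    (hA : ∀ i k, 0 ≤ A i k) (hW : ∀ k j, 0 ≤ W k j) (hfac : M = A * W) :
    ∃ (A' : Matrix (Fin m) (Fin r) ℝ) (W' : Matrix (Fin r) (Fin n) ℝ),
      (∀ i k, 0 ≤ A' i k) ∧ (∀ k j, 0 ≤ W' k j) ∧ M = A' * W' ∧ Stable M A' W' :=
  stmt_7_aux M A W hA hW hfac
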